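/- Let M be the substochastic restriction of a Markov transition matrix to X₀ with Perron–Frobenius eigenpair (λ, v), λ ∈ (0,1), v > 0, and suppose the twisted chain P̌_{ij} = λ^{-1} vᵢ^{-1} M_{ij} vⱼ converges: P̌ⁿ_{ij} → π̌(j) geometrically as n → ∞ for the unique invariant pmf π̌. Then for each initial state i ∈ X₀, P{τ > n | Φ₀ = i} = vᵢ [π̌(1/v) + εₙ(i)] λⁿ, where π̌(1/v) = Σⱼ π̌(j)/vⱼ and εₙ(i) → 0 geometrically fast; in particular lim_{n→∞} (1/n) log P{τ > n | Φ₀ = i} = log λ. -/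

import Mathlib

open Real Matrix Filter

/-- Survival probability asymptotics: with the taboo probabilities
`P{Φₙ = j, τ > n | Φ₀ = i} = (Mⁿ)_{ij}`, the Perron–Frobenius eigenpair
`(λ, v)` of the substochastic matrix `M`, and geometric ergodicity of the
Doob transform `P̌`, the survival probability satisfies
`P{τ > n | Φ₀ = i} = vᵢ [pich(1/v) + εₙ(i)] λⁿ` with `εₙ(i) → 0` geometrically,
and in particular `(1/n) log P{τ > n | Φ₀ = i} → log λ`. -/
theorem survival_probability_asymptotics
    (N₀ : ℕ) (hN₀ : 0 < N₀) (M : Matrix (Fin N₀) (Fin N₀) ℝ)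
    (hMnonneg : ∀ i j, 0 ≤ M i j)
    (lam : ℝ) (hlam : lam ∈ Set.Ioo (0 : ℝ) 1)
    (v : Fin N₀ → ℝ) (hv : ∀ i, 0 < v i)
    (heig : ∀ i, ∑ j, M i j * v j = lam * v i)
    (Pch : Matrix (Fin N₀) (Fin N₀) ℝ)
    (hPch : ∀ i j, Pch i j = lam⁻¹ * (v i)⁻¹ * M i j * v j)
    (pich : Fin N₀ → ℝ)
    (hergodic : ∃ C r : ℝ, 0 ≤ C ∧ 0 ≤ r ∧ r < 1 ∧
      ∀ n : ℕ, ∀ i j, |(Pch ^ n) i j - pich j| ≤ C * r ^ n) :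
    ∃ ε : ℕ → Fin N₀ → ℝ,
      (∃ C r : ℝ, 0 ≤ C ∧ 0 ≤ r ∧ r < 1 ∧ ∀ n i, |ε n i| ≤ C * r ^ n) ∧
      (∀ n : ℕ, ∀ i, ∑ j, (M ^ n) i j
          = v i * ((∑ j, pich j / v j) + ε n i) * lam ^ n) ∧
      (∀ i, Tendsto (fun n : ℕ => (1 / (n : ℝ)) * Real.log (∑ j, (M ^ n) i j))
        atTop (nhds (Real.log lam))) := by
  obtain ⟨C, r, hC, hr0, hr1, hCr⟩ := hergodic
  haveI : Nonempty (Fin N₀) := ⟨⟨0, hN₀⟩⟩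
  have hlam0 : (0:ℝ) < lam := hlam.1
  have hlamne : lam ≠ 0 := ne_of_gt hlam0
  have hvne : ∀ j, v j ≠ 0 := fun j => ne_of_gt (hv j)
  have hM : ∀ i j, M i j = lam * v i * Pch i j * (v j)⁻¹ := by
    intro i j
    rw [hPch]
    field_simp [hvne, hlamne]
  have key : ∀ n : ℕ, ∀ i j, (M ^ n) i j = lam ^ n * v i * (Pch ^ n) i j * (v j)⁻¹ := by
    intro n
    induction n with
    | zero =>
      intro i j
      simp only [pow_zero, Matrix.one_apply]
      split_ifs with h
      · subst h
        rw [one_mul, mul_one, mul_inv_cancel₀ (hvne i)]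
      · simp
    | succ n ih =>
      intro i j
      rw [pow_succ M, pow_succ Pch, Matrix.mul_apply, Matrix.mul_apply]
      calc ∑ k, (M ^ n) i k * M k j
          = ∑ k, (lam ^ n * lam) * v i * ((Pch ^ n) i k * Pch k j) * (v j)⁻¹ := by
            refine Finset.sum_congr rfl fun k _ => ?_
            rw [ih, hM]
            field_simp [hvne, hlamne]
        _ = (lam ^ n * lam) * v i * (∑ k, (Pch ^ n) i k * Pch k j) * (v j)⁻¹ := by
            rw [← Finset.sum_mul, ← Finset.mul_sum]
        _ = lam ^ (n + 1) * v i * (∑ k, (Pch ^ n) i k * Pch k j) * (v j)⁻¹ := by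
            rw [pow_succ]
  have hPnn : ∀ n : ℕ, ∀ i j, 0 ≤ (Pch ^ n) i j := by
    intro n
    induction n with
    | zero =>
      intro i j
      simp only [pow_zero, Matrix.one_apply]
      split_ifs <;> norm_num
    | succ n ih =>
      intro i j
      rw [pow_succ, Matrix.mul_apply]
      refine Finset.sum_nonneg fun k _ => mul_nonneg (ih i k) ?_
      rw [hPch]
      exact mul_nonneg (mul_nonneg (mul_nonneg (inv_nonneg.mpr hlam0.le)
        (inv_nonneg.mpr (hv k).le)) (hMnonneg k j)) (hv j).le
  have hrow : ∀ i, ∑ j, Pch i j = 1 := by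
    intro i
    have h1 : ∑ j, Pch i j = lam⁻¹ * (v i)⁻¹ * ∑ j, M i j * v j := by
      rw [Finset.mul_sum]
      refine Finset.sum_congr rfl fun j _ => ?_
      rw [hPch]; ring
    rw [h1, heig]
    field_simp
    exact div_self (hvne i)
  have hrown : ∀ n : ℕ, ∀ i, ∑ j, (Pch ^ n) i j = 1 := by
    intro n
    induction n with
    | zero => intro i; simp [Matrix.one_apply]
    | succ n ih =>
      intro i
      rw [pow_succ]
      simp only [Matrix.mul_apply]
      calc ∑ j, ∑ k, (Pch ^ n) i k * Pch k j
          = ∑ k, ∑ j, (Pch ^ n) i k * Pch k j := Finset.sum_comm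
        _ = ∑ k, (Pch ^ n) i k * ∑ j, Pch k j := by
            refine Finset.sum_congr rfl fun k _ => ?_
            rw [Finset.mul_sum]
        _ = ∑ k, (Pch ^ n) i k := by
            refine Finset.sum_congr rfl fun k _ => by rw [hrow k, mul_one]
        _ = 1 := ih i
  -- the error term
  set ε : ℕ → Fin N₀ → ℝ := fun n i => ∑ j, ((Pch ^ n) i j - pich j) * (v j)⁻¹ with hε
  have hsum : ∀ n i, (∑ j, pich j / v j) + ε n i = ∑ j, (Pch ^ n) i j * (v j)⁻¹ := by
    intro n i
    rw [hε, ← Finset.sum_add_distrib]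
    refine Finset.sum_congr rfl fun j _ => ?_
    rw [div_eq_mul_inv]
    ring
  have hMsum : ∀ n i, ∑ j, (M ^ n) i j = lam ^ n * v i * ∑ j, (Pch ^ n) i j * (v j)⁻¹ := by
    intro n i
    rw [Finset.mul_sum]
    refine Finset.sum_congr rfl fun j _ => ?_
    rw [key n i j]; ring
  have hinvnn : (0:ℝ) ≤ ∑ j : Fin N₀, (v j)⁻¹ :=
    Finset.sum_nonneg fun j _ => inv_nonneg.mpr (le_of_lt (hv j))
  refine ⟨ε, ⟨C * ∑ j, (v j)⁻¹, r, mul_nonneg hC hinvnn, hr0, hr1, ?_⟩, ?_, ?_⟩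
  · intro n i
    calc |ε n i| ≤ ∑ j, |((Pch ^ n) i j - pich j) * (v j)⁻¹| := Finset.abs_sum_le_sum_abs _ _
      _ ≤ ∑ j, (C * r ^ n) * (v j)⁻¹ := by
          refine Finset.sum_le_sum fun j _ => ?_
          rw [abs_mul, abs_of_nonneg (inv_nonneg.mpr (le_of_lt (hv j)))]
          exact mul_le_mul_of_nonneg_right (hCr n i j) (inv_nonneg.mpr (le_of_lt (hv j)))
      _ = C * (∑ j, (v j)⁻¹) * r ^ n := by rw [← Finset.mul_sum]; ring
  · intro n i
    rw [hMsum n i, ← hsum n i]; ring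
  · intro i
    set c : ℝ := Finset.univ.inf' Finset.univ_nonempty (fun j : Fin N₀ => (v j)⁻¹) with hcdef
    set b : ℝ := Finset.univ.sup' Finset.univ_nonempty (fun j : Fin N₀ => (v j)⁻¹) with hbdef
    have hcle : ∀ j, c ≤ (v j)⁻¹ := by
      intro j; rw [hcdef]; exact Finset.inf'_le _ (Finset.mem_univ j)
    have hble : ∀ j, (v j)⁻¹ ≤ b := by
      intro j; rw [hbdef]; exact Finset.le_sup' (fun j : Fin N₀ => (v j)⁻¹) (Finset.mem_univ j)
    have hc0 : 0 < c := by
      rw [hcdef, Finset.lt_inf'_iff]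
      exact fun j _ => inv_pos.mpr (hv j)
    set f : ℕ → ℝ := fun n => ∑ j, (Pch ^ n) i j * (v j)⁻¹ with hf
    have hfc : ∀ n, c ≤ f n := by
      intro n
      calc c = (∑ j, (Pch ^ n) i j) * c := by rw [hrown n i, one_mul]
        _ = ∑ j, (Pch ^ n) i j * c := by rw [Finset.sum_mul]
        _ ≤ f n := Finset.sum_le_sum fun j _ =>
            mul_le_mul_of_nonneg_left (hcle j) (hPnn n i j)
    have hfb : ∀ n, f n ≤ b := by
      intro n
      calc f n ≤ ∑ j, (Pch ^ n) i j * b := Finset.sum_le_sum fun j _ =>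
            mul_le_mul_of_nonneg_left (hble j) (hPnn n i j)
        _ = (∑ j, (Pch ^ n) i j) * b := by rw [Finset.sum_mul]
        _ = b := by rw [hrown n i, one_mul]
    have hf0 : ∀ n, 0 < f n := fun n => lt_of_lt_of_le hc0 (hfc n)
    have hlog : ∀ n : ℕ, Real.log (∑ j, (M ^ n) i j)
        = n * Real.log lam + (Real.log (v i) + Real.log (f n)) := by
      intro n
      rw [hMsum n i,
        Real.log_mul (mul_ne_zero (pow_ne_zero _ hlamne) (hvne i)) (ne_of_gt (hf0 n)),
        Real.log_mul (pow_ne_zero _ hlamne) (hvne i), Real.log_pow]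
      ring
    set K : ℝ := |Real.log (v i)| + (|Real.log c| + |Real.log b|) with hK
    have hgK : ∀ n, |Real.log (v i) + Real.log (f n)| ≤ K := by
      intro n
      have h1 : |Real.log (f n)| ≤ |Real.log c| + |Real.log b| := by
        rw [abs_le]
        constructor
        · calc -(|Real.log c| + |Real.log b|) ≤ -|Real.log c| := by
                have := abs_nonneg (Real.log b); linarith
            _ ≤ Real.log c := neg_abs_le _
            _ ≤ Real.log (f n) := Real.log_le_log hc0 (hfc n)
        · calc Real.log (f n) ≤ Real.log b := Real.log_le_log (hf0 n) (hfb n)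
            _ ≤ |Real.log b| := le_abs_self _
            _ ≤ |Real.log c| + |Real.log b| := by have := abs_nonneg (Real.log c); linarith
      calc |Real.log (v i) + Real.log (f n)| ≤ |Real.log (v i)| + |Real.log (f n)| := abs_add_le _ _
        _ ≤ K := by rw [hK]; linarith
    have hzero : Tendsto (fun n : ℕ => (1 / (n:ℝ)) * (Real.log (v i) + Real.log (f n)))
        atTop (nhds 0) := by
      refine squeeze_zero_norm (fun n => ?_) (tendsto_const_div_atTop_nhds_zero_nat K)
      rw [Real.norm_eq_abs, abs_mul, abs_of_nonneg (by positivity : (0:ℝ) ≤ 1/(n:ℝ))]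
      calc 1/(n:ℝ) * |Real.log (v i) + Real.log (f n)| ≤ 1/(n:ℝ) * K :=
            mul_le_mul_of_nonneg_left (hgK n) (by positivity)
        _ = K / (n:ℝ) := by ring
    have hmain : Tendsto (fun n : ℕ => Real.log lam
        + (1 / (n:ℝ)) * (Real.log (v i) + Real.log (f n))) atTop (nhds (Real.log lam)) := by
      have := tendsto_const_nhds (x := Real.log lam) (f := atTop (α := ℕ)) |>.add hzero
      simpa using this
    refine hmain.congr' ?_
    filter_upwards [eventually_ge_atTop 1] with n hn
    have hn0 : (n:ℝ) ≠ 0 := by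
      have : (0:ℝ) < (n:ℝ) := by exact_mod_cast hn
      exact ne_of_gt this
    rw [hlog n]
    field_simp
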